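/- arXiv:1608.05449 — 2 statements merged into one kernel-verified Lean document; each statement's English description precedes it below -/
import Mathlib

section
/- There exist an absolute constant C > 0 and p₀ such that for every prime p > p₀ and every subgroup G of 𝔽_p* with |G| > C·p^(3/4), the group G contains a non-trivial three-term arithmetic progression, i.e., there exist a ∈ G and b ∈ 𝔽_p with b ≠ 0 such that a, a+b, a+2b ∈ G. -/
open Finset

lemma psi_conj {p : ℕ} [NeZero p] (a : ZMod p) :
    (starRingEnd ℂ) (ZMod.stdAddChar a) = ZMod.stdAddChar (-a) := by
  rw [ZMod.stdAddChar_apply, ZMod.stdAddChar_apply, ← Circle.coe_inv_eq_conj,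
    ← AddChar.map_neg_eq_inv]

lemma psi_abs {p : ℕ} [NeZero p] (a : ZMod p) : ‖(ZMod.stdAddChar a : ℂ)‖ = 1 := by
  rw [ZMod.stdAddChar_apply]; exact Circle.norm_coe _

lemma psi_orth {p : ℕ} [NeZero p] (b : ZMod p) :
    ∑ t : ZMod p, ZMod.stdAddChar (t * b) = if b = 0 then (p : ℂ) else 0 := by
  have := AddChar.sum_mulShift b (ZMod.isPrimitive_stdAddChar p)
  rw [ZMod.card] at this
  rw [this]; split <;> simp

lemma aux_ap {p : ℕ} [hpf : Fact p.Prime] (hp : 2 < p) (A : Finset (ZMod p))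
    (hmul : ∀ g ∈ A, ∀ x ∈ A, g * x ∈ A)
    (h0 : (0 : ZMod p) ∉ A)
    (hcard : Real.sqrt p * p + p < (A.card : ℝ) ^ 2) :
    ∃ x ∈ A, ∃ y ∈ A, ∃ z ∈ A, x + z = 2 * y ∧ x ≠ y := by
  haveI : NeZero p := ⟨hpf.out.ne_zero⟩
  set D : ℕ := A.card with hD
  -- D positive
  have hp0 : (0:ℝ) < p := by positivity
  have hsp : (0:ℝ) ≤ Real.sqrt p := Real.sqrt_nonneg _
  have hDpos : 0 < D := by
    by_contra h
    push_neg at h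
    interval_cases D
    · simp at hcard; nlinarith
  -- the exponential sum
  set S : ZMod p → ℂ := fun t => ∑ x ∈ A, ZMod.stdAddChar (t * x) with hS
  have hS0 : S 0 = (D : ℂ) := by simp [hS, hD]
  -- invariance: image of A under multiplication by g ∈ A is A
  have hAeq : ∀ g ∈ A, A.image (g * ·) = A := by
    intro g hg
    apply Finset.eq_of_subset_of_card_le
    · intro y hy
      obtain ⟨x, hx, rfl⟩ := Finset.mem_image.1 hy
      exact hmul g hg x hx
    · rw [Finset.card_image_of_injective _ (mul_right_injective₀ (by rintro rfl; exact h0 hg))]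
  have hSinv : ∀ g ∈ A, ∀ t : ZMod p, S (t * g) = S t := by
    intro g hg t
    have hginj : Function.Injective (g * ·) :=
      mul_right_injective₀ (by rintro rfl; exact h0 hg)
    calc S (t * g) = ∑ x ∈ A, ZMod.stdAddChar (t * g * x) := rfl
      _ = ∑ x ∈ A, ZMod.stdAddChar (t * (g * x)) :=
          Finset.sum_congr rfl fun x _ => by ring_nf
      _ = ∑ y ∈ A.image (g * ·), ZMod.stdAddChar (t * y) :=
          by rw [Finset.sum_image fun a _ b _ h => hginj h]
      _ = S t := by rw [hAeq g hg]
  -- Parseval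
  have parseval : ∑ t : ZMod p, Complex.normSq (S t) = (p : ℝ) * D := by
    have key : ∀ t : ZMod p, (S t) * (starRingEnd ℂ) (S t)
        = ∑ x ∈ A, ∑ y ∈ A, ZMod.stdAddChar (t * (x - y)) := by
      intro t
      rw [hS, map_sum, Finset.sum_mul_sum]
      refine Finset.sum_congr rfl fun x _ => Finset.sum_congr rfl fun y _ => ?_
      rw [psi_conj, ← AddChar.map_add_eq_mul]
      congr 1; ring
    have keysum : ∑ t : ZMod p, (S t) * (starRingEnd ℂ) (S t) = ((p : ℂ)) * D := by
      simp_rw [key]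
      rw [Finset.sum_comm]
      have : ∀ x ∈ A, ∑ t : ZMod p, ∑ y ∈ A, ZMod.stdAddChar (t * (x - y))
          = (p : ℂ) := by
        intro x hx
        rw [Finset.sum_comm]
        have : ∀ y ∈ A, ∑ t : ZMod p, ZMod.stdAddChar (t * (x - y))
            = if y = x then (p : ℂ) else 0 := by
          intro y _
          rw [psi_orth]
          congr 1
          simp [sub_eq_zero, eq_comm]
        rw [Finset.sum_congr rfl this, Finset.sum_ite_eq' A x fun _ => (p:ℂ)]
        simp [hx]
      rw [Finset.sum_congr rfl this, Finset.sum_const, hD]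
      simp [mul_comm]
    have := keysum
    simp_rw [Complex.mul_conj] at this
    exact_mod_cast this
  -- pointwise bound
  have hbound : ∀ t : ZMod p, t ≠ 0 → Complex.normSq (S t) ≤ (p : ℝ) - D := by
    intro t ht
    have htail : ∑ s ∈ Finset.univ.erase (0 : ZMod p), Complex.normSq (S s)
        = (p : ℝ) * D - (D:ℝ)^2 := by
      have := parseval
      rw [← Finset.add_sum_erase _ _ (Finset.mem_univ (0 : ZMod p))] at this
      rw [hS0] at this
      simp only [Complex.normSq_natCast] at this
      nlinarith [this]
    have himg : ∑ s ∈ A.image (t * ·), Complex.normSq (S s) = (D:ℝ) * Complex.normSq (S t) := by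
      rw [Finset.sum_image (fun a _ b _ h => mul_left_cancel₀ ht h)]
      have : ∀ g ∈ A, Complex.normSq (S (t * g)) = Complex.normSq (S t) := fun g hg => by
        rw [hSinv g hg]
      rw [Finset.sum_congr rfl this, Finset.sum_const, hD]
      simp [mul_comm]
    have hsub : A.image (t * ·) ⊆ Finset.univ.erase (0 : ZMod p) := by
      intro s hs
      obtain ⟨g, hg, rfl⟩ := Finset.mem_image.1 hs
      refine Finset.mem_erase.2 ⟨?_, Finset.mem_univ _⟩
      exact mul_ne_zero ht (by rintro rfl; exact h0 hg)
    have hle : (D:ℝ) * Complex.normSq (S t) ≤ (p : ℝ) * D - (D:ℝ)^2 := by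
      rw [← himg, ← htail]
      exact Finset.sum_le_sum_of_subset_of_nonneg hsub fun i _ _ => Complex.normSq_nonneg _
    have hD1 : (1:ℝ) ≤ D := by exact_mod_cast hDpos
    nlinarith [hle, Complex.normSq_nonneg (S t)]
  have htail : ∑ s ∈ Finset.univ.erase (0 : ZMod p), Complex.normSq (S s)
      = (p : ℝ) * D - (D:ℝ)^2 := by
    have := parseval
    rw [← Finset.add_sum_erase _ _ (Finset.mem_univ (0 : ZMod p))] at this
    rw [hS0] at this
    simp only [Complex.normSq_natCast] at this
    nlinarith [this]
  have two_ne : (2 : ZMod p) ≠ 0 := by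
    have h2 : ((2:ℕ) : ZMod p) ≠ 0 := by
      rw [Ne, ZMod.natCast_eq_zero_iff]
      intro hdvd
      exact absurd (Nat.le_of_dvd (by norm_num) hdvd) (by omega)
    exact_mod_cast h2
  -- counting
  set T := (A ×ˢ A ×ˢ A).filter (fun q => q.1 + q.2.2 = 2 * q.2.1) with hT
  have hNid : ∑ t : ZMod p, S t * S (-(2*t)) * S t = (p : ℂ) * T.card := by
    have expand : ∀ t : ZMod p, S t * S (-(2*t)) * S t
        = ∑ x ∈ A, ∑ y ∈ A, ∑ z ∈ A,
            ZMod.stdAddChar (t * (x + z - 2*y)) := by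
      intro t
      calc S t * S (-(2*t)) * S t
          = (∑ x ∈ A, ZMod.stdAddChar (t*x)) * (∑ y ∈ A, ZMod.stdAddChar (-(2*t)*y))
            * (∑ z ∈ A, ZMod.stdAddChar (t*z)) := rfl
        _ = ∑ x ∈ A, ∑ y ∈ A, ∑ z ∈ A,
              ZMod.stdAddChar (t*x) * ZMod.stdAddChar (-(2*t)*y) * ZMod.stdAddChar (t*z) := by
            simp_rw [Finset.sum_mul, Finset.mul_sum]
            simp_rw [Finset.sum_mul]
            exact Finset.sum_congr rfl fun x _ => Finset.sum_comm
        _ = _ := by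
            refine Finset.sum_congr rfl fun x _ => Finset.sum_congr rfl fun y _ =>
              Finset.sum_congr rfl fun z _ => ?_
            rw [← AddChar.map_add_eq_mul, ← AddChar.map_add_eq_mul]
            congr 1; ring
    rw [Finset.sum_congr rfl fun t _ => expand t]
    rw [Finset.sum_comm]
    have step : ∀ x ∈ A, ∑ t : ZMod p, ∑ y ∈ A, ∑ z ∈ A, ZMod.stdAddChar (t * (x + z - 2*y))
        = ∑ y ∈ A, ∑ z ∈ A, if x + z = 2*y then (p:ℂ) else 0 := by
      intro x _
      rw [Finset.sum_comm]
      refine Finset.sum_congr rfl fun y _ => ?_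
      rw [Finset.sum_comm]
      refine Finset.sum_congr rfl fun z _ => ?_
      rw [psi_orth]
      congr 1
      simp [sub_eq_zero]
    rw [Finset.sum_congr rfl step, hT]
    rw [Finset.card_filter]
    push_cast
    rw [Finset.sum_product]
    simp_rw [Finset.sum_product, Finset.mul_sum]
    refine Finset.sum_congr rfl fun x _ => Finset.sum_congr rfl fun y _ =>
      Finset.sum_congr rfl fun z _ => ?_
    simp only [mul_ite, mul_one, mul_zero]
  -- the estimate
  have hDle : (D:ℝ) ≤ p := by
    have := Finset.card_le_card (Finset.subset_univ A)
    rw [Finset.card_univ, ZMod.card] at this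
    exact_mod_cast this
  have habs : |(p:ℝ) * T.card - (D:ℝ)^3| ≤ Real.sqrt p * ((p:ℝ)*D - (D:ℝ)^2) := by
    have hsplit : (p:ℂ) * T.card - (D:ℂ)^3 = ∑ t ∈ Finset.univ.erase (0:ZMod p),
        S t * S (-(2*t)) * S t := by
      rw [← hNid, ← Finset.add_sum_erase _ _ (Finset.mem_univ (0:ZMod p))]
      have : S (0:ZMod p) * S (-(2*(0:ZMod p))) * S 0 = (D:ℂ)^3 := by
        rw [mul_zero, neg_zero, hS0]; ring
      rw [this]; ring
    have hre : ((p:ℂ) * T.card - (D:ℂ)^3) = (((p:ℝ) * T.card - (D:ℝ)^3 : ℝ) : ℂ) := by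
      push_cast; ring
    have hband : ‖(p:ℂ) * T.card - (D:ℂ)^3‖
        ≤ Real.sqrt p * ((p:ℝ)*D - (D:ℝ)^2) := by
      rw [hsplit]
      calc ‖∑ t ∈ Finset.univ.erase (0:ZMod p), S t * S (-(2*t)) * S t‖
          ≤ ∑ t ∈ Finset.univ.erase (0:ZMod p), ‖S t * S (-(2*t)) * S t‖ :=
            norm_sum_le _ _
        _ ≤ ∑ t ∈ Finset.univ.erase (0:ZMod p), Complex.normSq (S t) * Real.sqrt p := by
            refine Finset.sum_le_sum fun t ht => ?_
            have ht0 : t ≠ 0 := (Finset.mem_erase.1 ht).1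
            have h2t : -(2*t) ≠ 0 := by
              simp only [neg_ne_zero]
              exact mul_ne_zero two_ne ht0
            rw [norm_mul, norm_mul]
            have h1 : ‖S t‖ * ‖S t‖ = Complex.normSq (S t) := by
              rw [← Complex.sq_norm]; ring
            have h2 : ‖S (-(2*t))‖ ≤ Real.sqrt p := by
              rw [Complex.norm_def]
              refine Real.sqrt_le_sqrt ?_
              have hD0 : (0:ℝ) ≤ D := Nat.cast_nonneg _
              linarith [hbound _ h2t]
            calc ‖S t‖ * ‖S (-(2*t))‖ * ‖S t‖
                = (‖S t‖ * ‖S t‖) * ‖S (-(2*t))‖ := by ring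
              _ ≤ (‖S t‖ * ‖S t‖) * Real.sqrt p := by
                  refine mul_le_mul_of_nonneg_left h2 ?_
                  positivity
              _ = Complex.normSq (S t) * Real.sqrt p := by rw [h1]
        _ = Real.sqrt p * ((p:ℝ)*D - (D:ℝ)^2) := by
            rw [← Finset.sum_mul, htail]; ring
    calc |(p:ℝ) * T.card - (D:ℝ)^3| = ‖(p:ℂ) * T.card - (D:ℂ)^3‖ := by
          rw [hre, Complex.norm_real, Real.norm_eq_abs]
      _ ≤ _ := hband
  -- conclude T.card > D
  have hNgt : (D:ℝ) < (T.card : ℝ) := by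
    have h1 : (p:ℝ) * T.card ≥ (D:ℝ)^3 - Real.sqrt p * ((p:ℝ)*D - (D:ℝ)^2) := by
      have := abs_le.1 habs
      linarith [this.1]
    have hD1 : (1:ℝ) ≤ D := by exact_mod_cast hDpos
    have key : (p:ℝ) * D < (p:ℝ) * T.card := by nlinarith [hsp, hp0, hcard, hDle]
    have := lt_of_mul_lt_mul_left key (le_of_lt hp0)
    exact this
  have hTD : D < T.card := by exact_mod_cast hNgt
  -- extract nondiagonal solution
  have hnsub : ¬ T ⊆ A.image (fun x => (x, x, x)) := by
    intro hsub
    have h1 := Finset.card_le_card hsub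
    have h2 : (A.image fun x => (x,x,x)).card ≤ D :=  Finset.card_image_le
    omega
  obtain ⟨q, hqT, hq⟩ := Finset.not_subset.1 hnsub
  obtain ⟨x, y, z⟩ := q
  rw [hT, Finset.mem_filter] at hqT
  obtain ⟨hmem, heq⟩ := hqT
  simp only [Finset.mem_product] at hmem
  obtain ⟨hx, hy, hz⟩ := hmem
  refine ⟨x, hx, y, hy, z, hz, heq, ?_⟩
  rintro rfl
  have hzx : z = x := by
    have : x + z = x + x := by rw [heq]; ring
    exact add_left_cancel this
  exact hq (Finset.mem_image.2 ⟨x, hx, by rw [hzx]⟩)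

/-- There is an absolute constant `C > 0` such that for all sufficiently large primes `p`,
every subgroup `G ≤ 𝔽_p^*` with `|G| > C·p^(3/4)` contains a non-trivial three-term
arithmetic progression `a, a+b, a+2b` with `b ≠ 0`. -/
theorem three_term_progressions_in_multiplicative_groups :
    ∃ C : ℝ, 0 < C ∧ ∃ p₀ : ℕ, ∀ p : ℕ, p.Prime → p > p₀ →
      ∀ G : Subgroup (ZMod p)ˣ,
        (Nat.card G : ℝ) > C * (p : ℝ) ^ ((3 : ℝ) / 4) →
        ∃ a b : ZMod p, b ≠ 0 ∧
          a ∈ Units.val '' (G : Set (ZMod p)ˣ) ∧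
          a + b ∈ Units.val '' (G : Set (ZMod p)ˣ) ∧
          a + 2 * b ∈ Units.val '' (G : Set (ZMod p)ˣ) := by
  refine ⟨2, by norm_num, 2, ?_⟩
  intro p hp hp2 G hG
  haveI : Fact p.Prime := ⟨hp⟩
  classical
  have hfin : (Units.val '' (G : Set (ZMod p)ˣ)).Finite := Set.toFinite _
  set A : Finset (ZMod p) := hfin.toFinset with hA
  have hmemA : ∀ x, x ∈ A ↔ x ∈ Units.val '' (G : Set (ZMod p)ˣ) := fun x =>
    Set.Finite.mem_toFinset _
  have hp0 : (0:ℝ) < p := by positivity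
  have hp1 : (1:ℝ) ≤ p := by exact_mod_cast hp.one_lt.le
  have hcardA : A.card = Nat.card G := by
    rw [hA, ← Set.ncard_eq_toFinset_card _ hfin,
      Set.ncard_image_of_injective _ Units.val_injective, ← Nat.card_coe_set_eq]
    rfl
  have hmul : ∀ g ∈ A, ∀ x ∈ A, g * x ∈ A := by
    intro g hg x hx
    rw [hmemA] at hg hx ⊢
    obtain ⟨u, hu, rfl⟩ := hg
    obtain ⟨v, hv, rfl⟩ := hx
    exact ⟨u * v, mul_mem hu hv, by simp⟩
  have h0 : (0 : ZMod p) ∉ A := by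
    rw [hmemA]
    rintro ⟨u, -, hu⟩
    exact u.ne_zero hu
  have hcard : Real.sqrt p * p + p < (A.card : ℝ) ^ 2 := by
    rw [hcardA]
    set u : ℝ := (p:ℝ) ^ ((3:ℝ)/4) with hu
    have hu0 : 0 ≤ u := by positivity
    have h34 : u ^ 2 = Real.sqrt p * p := by
      rw [hu, ← Real.rpow_natCast ((p:ℝ) ^ ((3:ℝ)/4)) 2, ← Real.rpow_mul hp0.le]
      rw [Real.sqrt_eq_rpow]
      nth_rewrite 3 [← Real.rpow_one (p:ℝ)]
      rw [← Real.rpow_add hp0]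
      norm_num
    have hsq1 : (1:ℝ) ≤ Real.sqrt p := by
      rw [← Real.sqrt_one]
      exact Real.sqrt_le_sqrt hp1
    nlinarith [hG, hu0, hsq1, hp1, h34]
  obtain ⟨x, hx, y, hy, z, hz, heq, hne⟩ :=
    aux_ap hp2 A hmul h0 hcard
  refine ⟨x, y - x, sub_ne_zero.2 (Ne.symm hne), ?_, ?_, ?_⟩
  · rw [← hmemA]; exact hx
  · rw [← hmemA]
    have : x + (y - x) = y := by ring
    rw [this]; exact hy
  · rw [← hmemA]
    have : x + 2 * (y - x) = z := by linear_combination -heq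
    rw [this]; exact hz
end

section
/- Let p be a prime, r a positive integer, and d a positive divisor of p − 1. Suppose that for every t ∈ 𝔽_p* with 1 + s·t ≠ 0 for all s = 1, …, r, the subgroup of 𝔽_p* generated by {1+t, 1+2t, …, 1+rt} has order greater than d. Then the unique subgroup G of 𝔽_p* of order d contains no non-trivial (r+1)-term arithmetic progression, i.e., there are no a, b ∈ 𝔽_p with b ≠ 0 such that a, a+b, a+2b, …, a+rb all lie in G. -/
/-- If `d ∣ p - 1` and for every `t ∈ 𝔽_p^*` with `1 + s·t ≠ 0` for `s = 1, …, r` the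
subgroup of `𝔽_p^*` generated by `1+t, …, 1+rt` has order greater than `d`, then the
subgroup of `𝔽_p^*` of order `d` contains no non-trivial `(r+1)`-term arithmetic
progression. -/
theorem no_progressions_in_subgroup_of_order_d (p : ℕ) [Fact p.Prime] (r : ℕ) (hr : 0 < r)
    (d : ℕ) (hd : 0 < d) (hdvd : d ∣ p - 1)
    (horder : ∀ t : ZMod p, t ≠ 0 →
      (∀ s : ℕ, 1 ≤ s → s ≤ r → 1 + (s : ZMod p) * t ≠ 0) →
      Nat.card (Subgroup.closure {u : (ZMod p)ˣ | ∃ s : ℕ, 1 ≤ s ∧ s ≤ r ∧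
          (u : ZMod p) = 1 + (s : ZMod p) * t}) > d)
    (G : Subgroup (ZMod p)ˣ) (hG : Nat.card G = d) :
    ¬∃ a b : ZMod p, b ≠ 0 ∧ ∀ i : ℕ, i ≤ r →
      a + (i : ZMod p) * b ∈ Units.val '' (G : Set (ZMod p)ˣ) := by
  rintro ⟨a, b, hb, hall⟩
  obtain ⟨u₀, hu₀G, hu₀⟩ := hall 0 (Nat.zero_le r)
  simp only [Nat.cast_zero, zero_mul, add_zero] at hu₀
  have ha : a ≠ 0 := hu₀ ▸ u₀.ne_zero
  set t : ZMod p := b * a⁻¹ with ht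
  have ht0 : t ≠ 0 := mul_ne_zero hb (inv_ne_zero ha)
  have key : ∀ s : ℕ, 1 ≤ s → s ≤ r →
      (1 : ZMod p) + (s : ZMod p) * t = (a + (s : ZMod p) * b) * a⁻¹ := by
    intro s h1 h2
    simp only [ht, add_mul, mul_inv_cancel₀ ha, mul_assoc]
  have hne : ∀ s : ℕ, 1 ≤ s → s ≤ r → 1 + (s : ZMod p) * t ≠ 0 := by
    intro s h1 h2
    rw [key s h1 h2]
    obtain ⟨u, huG, hu⟩ := hall s h2
    exact mul_ne_zero (hu ▸ u.ne_zero) (inv_ne_zero ha)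
  have hsub : Subgroup.closure {u : (ZMod p)ˣ | ∃ s : ℕ, 1 ≤ s ∧ s ≤ r ∧
      (u : ZMod p) = 1 + (s : ZMod p) * t} ≤ G := by
    rw [Subgroup.closure_le]
    rintro u ⟨s, h1, h2, hu⟩
    obtain ⟨v, hvG, hv⟩ := hall s h2
    have : u = v * u₀⁻¹ := by
      ext
      rw [hu, key s h1 h2]
      simp [hv, hu₀]
    rw [this]
    exact mul_mem hvG (inv_mem hu₀G)
  have := Subgroup.card_le_of_le hsub
  have h2 := horder t ht0 hne
  omega
end
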